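/- If R is a transitive relation on a countable set S, then its probabilistic lifting R̂ to sub-probability distributions is transitive: μ R̂ ν and ν R̂ ρ imply μ R̂ ρ. -/

import Mathlib

open scoped ENNReal

/-- A discrete sub-probability distribution: total mass at most 1. -/
def SubDist {S : Type*} (μ : S → ℝ≥0∞) : Prop := ∑' x, μ x ≤ 1

/-- Probabilistic lifting of a relation via a matching (coupling). -/
def Lift {S : Type*} (R : S → S → Prop) (μ ν : S → ℝ≥0∞) : Prop :=
  ∃ m : S → S → ℝ≥0∞,
    (∀ x y, m x y ≠ 0 → R x y) ∧
    (∀ x, (∑' y, m x y) = μ x) ∧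
    (∀ y, (∑' x, m x y) ≤ ν y)

/-- The probabilistic lifting of a transitive relation is transitive. -/
theorem stmt7 {S : Type*} [Countable S] (R : S → S → Prop)
    (htrans : ∀ x y z, R x y → R y z → R x z)
    (μ ν ρ : S → ℝ≥0∞) (hμ : SubDist μ) (hν : SubDist ν) (hρ : SubDist ρ)
    (h1 : Lift R μ ν) (h2 : Lift R ν ρ) : Lift R μ ρ := by
  obtain ⟨m, hmR, hmrow, hmcol⟩ := h1
  obtain ⟨m', hm'R, hm'row, hm'col⟩ := h2
  -- ν y is finite
  have hνfin : ∀ y, ν y ≠ ∞ := by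
    intro y
    exact ne_top_of_le_ne_top (by norm_num) (le_trans (ENNReal.le_tsum y) hν)
  -- if ν y = 0 then m x y = 0
  have hzero : ∀ x y, ν y = 0 → m x y = 0 := by
    intro x y h0
    have : (∑' x, m x y) ≤ 0 := h0 ▸ hmcol y
    have := le_antisymm (le_trans (ENNReal.le_tsum x) this) zero_le
    exact this
  refine ⟨fun x z => ∑' y, m x y * m' y z / ν y, ?_, ?_, ?_⟩
  · intro x z hne
    have : ∃ y, m x y * m' y z / ν y ≠ 0 := by
      by_contra h
      push_neg at h
      exact hne (by simpa [ENNReal.tsum_eq_zero] using h)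
    obtain ⟨y, hy⟩ := this
    have hmxy : m x y ≠ 0 := by
      intro h; apply hy; simp [h]
    have hm'yz : m' y z ≠ 0 := by
      intro h; apply hy; simp [h]
    exact htrans x y z (hmR x y hmxy) (hm'R y z hm'yz)
  · intro x
    rw [ENNReal.tsum_comm]
    rw [← hmrow x]
    congr 1
    funext y
    by_cases h0 : ν y = 0
    · simp [hzero x y h0]
    · simp_rw [div_eq_mul_inv, mul_assoc, ENNReal.tsum_mul_left,
        ENNReal.tsum_mul_right, hm'row y, ENNReal.mul_inv_cancel h0 (hνfin y), mul_one]
  · intro z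
    rw [ENNReal.tsum_comm]
    calc (∑' y, ∑' x, m x y * m' y z / ν y)
        = ∑' y, (∑' x, m x y) * (m' y z / ν y) := by
          congr 1; funext y
          simp_rw [div_eq_mul_inv, mul_assoc, ENNReal.tsum_mul_right]
      _ ≤ ∑' y, ν y * (m' y z / ν y) := by
          apply ENNReal.tsum_le_tsum; intro y
          exact mul_le_mul_left (hmcol y) _
      _ ≤ ∑' y, m' y z := by
          apply ENNReal.tsum_le_tsum; intro y
          by_cases h0 : ν y = 0
          · simp [h0]
          · rw [ENNReal.mul_div_cancel h0 (hνfin y)]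
      _ ≤ ρ z := hm'col z
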